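/- arXiv:2408.01662 — 3 statements merged into one kernel-verified Lean document; each statement's English description precedes it below -/
import Mathlib

section
/- Let Y = S D T^T be an SVD with S^T S = I, T orthogonal, D diagonal. Let γ, λ₁ > 0, Z ∈ ℝ^{n×m}, P ∈ ℝ^{m×m} symmetric positive definite. Define A = -(γ-1) D² + γ² D S^T Z (γ Z^T Z + λ₁ P)^{-1} Z^T S D. Then for any unit vector v ∈ ℝ^p with q = T^T v, the infimum over η ∈ ℝ^m of f(v,η) = ‖Y - Y v v^T‖_F² + γ‖Y v - Z η‖₂² + λ₁ η^T P η equals ‖Y‖_F² - q^T A q. -/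
open Matrix

/-- Squared Frobenius norm of a real matrix. -/
noncomputable def frob2 {n p : ℕ} (M : Matrix (Fin n) (Fin p) ℝ) : ℝ :=
  Matrix.trace (Mᵀ * M)

private lemma dot_mulVec_symm {k l : ℕ} (B : Matrix (Fin k) (Fin l) ℝ) (x : Fin k → ℝ)
    (y : Fin l → ℝ) : x ⬝ᵥ (B *ᵥ y) = (Bᵀ *ᵥ x) ⬝ᵥ y := by
  rw [Matrix.dotProduct_mulVec, Matrix.mulVec_transpose]

private lemma trace_mul_vecMulVec {k : ℕ} (B : Matrix (Fin k) (Fin k) ℝ) (x y : Fin k → ℝ) :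
    Matrix.trace (B * vecMulVec x y) = y ⬝ᵥ (B *ᵥ x) := by
  simp only [Matrix.trace, Matrix.diag_apply, Matrix.mul_apply, vecMulVec_apply,
    dotProduct, Matrix.mulVec, Finset.mul_sum]
  exact Finset.sum_congr rfl fun i _ => Finset.sum_congr rfl fun j _ => by ring

theorem stmt8 {n p m : ℕ} (Y S : Matrix (Fin n) (Fin p) ℝ) (d : Fin p → ℝ)
    (T : Matrix (Fin p) (Fin p) ℝ) (Z : Matrix (Fin n) (Fin m) ℝ)
    (P : Matrix (Fin m) (Fin m) ℝ) (γ lam : ℝ)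
    (hS : Sᵀ * S = 1) (hT : Tᵀ * T = 1) (hY : Y = S * diagonal d * Tᵀ)
    (hγ : 0 < γ) (hlam : 0 < lam) (hP : P.PosDef)
    (A : Matrix (Fin p) (Fin p) ℝ)
    (hA : A = (-(γ - 1)) • (diagonal d * diagonal d) +
      γ ^ 2 • (diagonal d * Sᵀ * Z * (γ • (Zᵀ * Z) + lam • P)⁻¹ * Zᵀ * S * diagonal d))
    (v : Fin p → ℝ) (hv : v ⬝ᵥ v = 1) (q : Fin p → ℝ) (hq : q = Tᵀ *ᵥ v) :
    ⨅ η : Fin m → ℝ,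
        (frob2 (Y - Y * vecMulVec v v)
          + γ * ((Y *ᵥ v - Z *ᵥ η) ⬝ᵥ (Y *ᵥ v - Z *ᵥ η))
          + lam * (η ⬝ᵥ (P *ᵥ η)))
      = frob2 Y - q ⬝ᵥ (A *ᵥ q) := by
  classical
  set D := diagonal d with hDdef
  have hDt : Dᵀ = D := diagonal_transpose d
  have hPt : Pᵀ = P := by
    rw [← conjTranspose_eq_transpose_of_trivial]; exact hP.1
  set M : Matrix (Fin m) (Fin m) ℝ := γ • (Zᵀ * Z) + lam • P with hMdef
  have hMt : Mᵀ = M := by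
    rw [hMdef, transpose_add, transpose_smul, transpose_smul, transpose_mul,
      transpose_transpose, hPt]
  -- quadratic form of M
  have hquad : ∀ x : Fin m → ℝ,
      x ⬝ᵥ (M *ᵥ x) = γ * ((Z *ᵥ x) ⬝ᵥ (Z *ᵥ x)) + lam * (x ⬝ᵥ (P *ᵥ x)) := by
    intro x
    rw [hMdef, add_mulVec, smul_mulVec, smul_mulVec, dotProduct_add,
      dotProduct_smul, dotProduct_smul, smul_eq_mul, smul_eq_mul, ← mulVec_mulVec,
      dot_mulVec_symm Zᵀ, transpose_transpose]
  have hZx : ∀ x : Fin m → ℝ, 0 ≤ (Z *ᵥ x) ⬝ᵥ (Z *ᵥ x) := fun x =>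
    Finset.sum_nonneg fun i _ => mul_self_nonneg _
  have hMpd : M.PosDef := by
    rw [posDef_iff_dotProduct_mulVec]
    constructor
    · show Mᴴ = M
      rw [conjTranspose_eq_transpose_of_trivial, hMt]
    · intro x hx
      have h1 : 0 < x ⬝ᵥ (P *ᵥ x) := by simpa using hP.dotProduct_mulVec_pos hx
      have h2 := hZx x
      simp only [star_trivial]
      rw [hquad x]
      nlinarith
  have hMunit : IsUnit M.det := isUnit_iff_ne_zero.mpr (ne_of_gt hMpd.det_pos)
  have hMinv : M * M⁻¹ = 1 := mul_nonsing_inv M hMunit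
  have hMit : (M⁻¹)ᵀ = M⁻¹ := by rw [transpose_nonsing_inv, hMt]
  set w : Fin n → ℝ := Y *ᵥ v with hw
  have hwq : w = S *ᵥ (D *ᵥ q) := by
    rw [hw, hY, hq, ← mulVec_mulVec, ← mulVec_mulVec]
  have hSu : ∀ x : Fin p → ℝ, (S *ᵥ x) ⬝ᵥ (S *ᵥ x) = x ⬝ᵥ x := by
    intro x
    rw [dot_mulVec_symm, mulVec_mulVec, hS, one_mulVec]
  have hww : w ⬝ᵥ w = q ⬝ᵥ ((D * D) *ᵥ q) := by
    rw [hwq, hSu, dot_mulVec_symm, hDt, mulVec_mulVec, dotProduct_comm]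
  set b : Fin m → ℝ := γ • (Zᵀ *ᵥ w) with hb
  set e : Fin m → ℝ := M⁻¹ *ᵥ b with he
  have hMe : M *ᵥ e = b := by rw [he, mulVec_mulVec, hMinv, one_mulVec]
  have hMsymdot : ∀ x y : Fin m → ℝ, x ⬝ᵥ (M *ᵥ y) = y ⬝ᵥ (M *ᵥ x) := by
    intro x y; rw [dot_mulVec_symm, hMt, dotProduct_comm]
  -- Frobenius part
  set V : Matrix (Fin p) (Fin p) ℝ := vecMulVec v v with hV
  have hVt : Vᵀ = V := by
    ext i j; simp [hV, vecMulVec_apply, mul_comm]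
  have hVV : V * V = V := by
    ext i j
    simp only [hV, Matrix.mul_apply, vecMulVec_apply]
    have : ∑ k, v i * v k * (v k * v j) = (v i * v j) * (v ⬝ᵥ v) := by
      rw [dotProduct, Finset.mul_sum]
      exact Finset.sum_congr rfl fun k _ => by ring
    rw [this, hv, mul_one]
  have hYYV : Matrix.trace (Yᵀ * Y * V) = w ⬝ᵥ w := by
    rw [hV, trace_mul_vecMulVec, ← mulVec_mulVec, dot_mulVec_symm Yᵀ, transpose_transpose]
  have hfrob : frob2 (Y - Y * V) = frob2 Y - w ⬝ᵥ w := by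
    have expand : (Y - Y * V)ᵀ * (Y - Y * V)
        = Yᵀ * Y - Yᵀ * (Y * V) - Vᵀ * (Yᵀ * Y) + Vᵀ * (Yᵀ * (Y * V)) := by
      rw [transpose_sub, transpose_mul, Matrix.sub_mul, Matrix.mul_sub, Matrix.mul_sub]
      simp only [Matrix.mul_assoc]
      abel
    have t2 : Matrix.trace (Yᵀ * (Y * V)) = w ⬝ᵥ w := by
      rw [← Matrix.mul_assoc, hYYV]
    have t3 : Matrix.trace (Vᵀ * (Yᵀ * Y)) = w ⬝ᵥ w := by
      rw [hVt, trace_mul_comm, hYYV]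
    have t4 : Matrix.trace (Vᵀ * (Yᵀ * (Y * V))) = w ⬝ᵥ w := by
      rw [hVt, trace_mul_comm]
      simp only [Matrix.mul_assoc]
      rw [hVV, ← Matrix.mul_assoc, hYYV]
    unfold frob2
    rw [expand, trace_add, trace_sub, trace_sub, t2, t3, t4]
    ring
  -- pointwise identity (completion of square)
  have key : ∀ η : Fin m → ℝ,
      frob2 (Y - Y * V) + γ * ((Y *ᵥ v - Z *ᵥ η) ⬝ᵥ (Y *ᵥ v - Z *ᵥ η))
        + lam * (η ⬝ᵥ (P *ᵥ η))
      = (frob2 Y - w ⬝ᵥ w + γ * (w ⬝ᵥ w) - e ⬝ᵥ b) + (η - e) ⬝ᵥ (M *ᵥ (η - e)) := by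
    intro η
    have hcross : w ⬝ᵥ (Z *ᵥ η) = η ⬝ᵥ (Zᵀ *ᵥ w) := by
      rw [dot_mulVec_symm, dotProduct_comm]
    have hηb : η ⬝ᵥ b = γ * (w ⬝ᵥ (Z *ᵥ η)) := by
      rw [hb, dotProduct_smul, smul_eq_mul, hcross]
    have hq1 : (η - e) ⬝ᵥ (M *ᵥ (η - e))
        = η ⬝ᵥ (M *ᵥ η) - 2 * (η ⬝ᵥ b) + e ⬝ᵥ b := by
      rw [mulVec_sub, hMe, dotProduct_sub, sub_dotProduct, sub_dotProduct,
        hMsymdot e η, hMe]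
      ring
    have hL : (w - Z *ᵥ η) ⬝ᵥ (w - Z *ᵥ η)
        = w ⬝ᵥ w - 2 * (w ⬝ᵥ (Z *ᵥ η)) + (Z *ᵥ η) ⬝ᵥ (Z *ᵥ η) := by
      rw [dotProduct_sub, sub_dotProduct, sub_dotProduct, dotProduct_comm (Z *ᵥ η) w]
      ring
    rw [hfrob, ← hw, hL, hq1, hquad η, hηb]
    ring
  -- nonnegativity
  have hnn : ∀ x : Fin m → ℝ, 0 ≤ x ⬝ᵥ (M *ᵥ x) := fun x => by
    simpa using hMpd.posSemidef.dotProduct_mulVec_nonneg x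
  -- identify the constant
  set u : Fin m → ℝ := (Zᵀ * S * D) *ᵥ q with hu
  have hZw : Zᵀ *ᵥ w = u := by
    rw [hwq, hu, mulVec_mulVec, mulVec_mulVec]
  have heb : e ⬝ᵥ b = γ ^ 2 * (u ⬝ᵥ (M⁻¹ *ᵥ u)) := by
    rw [he, hb, hZw, mulVec_smul, smul_dotProduct, dotProduct_smul, smul_eq_mul,
      smul_eq_mul, dotProduct_comm]
    ring
  have hc : frob2 Y - w ⬝ᵥ w + γ * (w ⬝ᵥ w) - e ⬝ᵥ b = frob2 Y - q ⬝ᵥ (A *ᵥ q) := by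
    have hAq : q ⬝ᵥ (A *ᵥ q)
        = -(γ - 1) * (q ⬝ᵥ ((D * D) *ᵥ q)) + γ ^ 2 * (u ⬝ᵥ (M⁻¹ *ᵥ u)) := by
      have htr : (D * Sᵀ * Z)ᵀ = Zᵀ * S * D := by
        rw [transpose_mul, transpose_mul, transpose_transpose, hDt, ← Matrix.mul_assoc]
      have hmv : (D * Sᵀ * Z * M⁻¹ * Zᵀ * S * D) *ᵥ q = (D * Sᵀ * Z) *ᵥ (M⁻¹ *ᵥ u) := by
        rw [hu, mulVec_mulVec, mulVec_mulVec]
        congr 1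
        simp only [Matrix.mul_assoc]
      have hsecond : q ⬝ᵥ ((D * Sᵀ * Z * M⁻¹ * Zᵀ * S * D) *ᵥ q) = u ⬝ᵥ (M⁻¹ *ᵥ u) := by
        rw [hmv, dot_mulVec_symm, htr, ← hu]
      rw [hA, add_mulVec, smul_mulVec, smul_mulVec,
        dotProduct_add, dotProduct_smul, dotProduct_smul, smul_eq_mul, smul_eq_mul,
        hsecond]
    rw [hAq, hww, heb]
    ring
  -- compute the infimum
  have hbdd : BddBelow (Set.range fun η : Fin m → ℝ =>
      frob2 (Y - Y * V) + γ * ((Y *ᵥ v - Z *ᵥ η) ⬝ᵥ (Y *ᵥ v - Z *ᵥ η))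
        + lam * (η ⬝ᵥ (P *ᵥ η))) := by
    refine ⟨frob2 Y - w ⬝ᵥ w + γ * (w ⬝ᵥ w) - e ⬝ᵥ b, ?_⟩
    rintro x ⟨η, rfl⟩
    show frob2 Y - w ⬝ᵥ w + γ * (w ⬝ᵥ w) - e ⬝ᵥ b
        ≤ frob2 (Y - Y * V) + γ * ((Y *ᵥ v - Z *ᵥ η) ⬝ᵥ (Y *ᵥ v - Z *ᵥ η))
          + lam * (η ⬝ᵥ (P *ᵥ η))
    rw [key η]
    linarith [hnn (η - e)]
  apply le_antisymm
  · have hle := ciInf_le hbdd e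
    have hee : frob2 (Y - Y * V) + γ * ((Y *ᵥ v - Z *ᵥ e) ⬝ᵥ (Y *ᵥ v - Z *ᵥ e))
        + lam * (e ⬝ᵥ (P *ᵥ e)) = frob2 Y - q ⬝ᵥ (A *ᵥ q) := by
      rw [key e, ← hc, sub_self]
      simp
    calc (⨅ η : Fin m → ℝ, (frob2 (Y - Y * V)
            + γ * ((Y *ᵥ v - Z *ᵥ η) ⬝ᵥ (Y *ᵥ v - Z *ᵥ η)) + lam * (η ⬝ᵥ (P *ᵥ η))))
        ≤ frob2 (Y - Y * V) + γ * ((Y *ᵥ v - Z *ᵥ e) ⬝ᵥ (Y *ᵥ v - Z *ᵥ e))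
            + lam * (e ⬝ᵥ (P *ᵥ e)) := hle
      _ = frob2 Y - q ⬝ᵥ (A *ᵥ q) := hee
  · refine le_ciInf fun η => ?_
    show frob2 Y - q ⬝ᵥ (A *ᵥ q)
        ≤ frob2 (Y - Y * V) + γ * ((Y *ᵥ v - Z *ᵥ η) ⬝ᵥ (Y *ᵥ v - Z *ᵥ η))
          + lam * (η ⬝ᵥ (P *ᵥ η))
    rw [key η, ← hc]
    linarith [hnn (η - e)]
end

section
/- Let f(v, η) = ‖Y - Y v v^T‖_F² + γ‖Y v - Z η‖₂² + λ η^T P η with Y = S D T^T an SVD, γ, λ > 0, P symmetric positive definite. If q is a unit eigenvector of A = -(γ-1)D² + γ² D S^T Z (γ Z^T Z + λ P)^{-1} Z^T S D corresponding to its largest eigenvalue, then v* = T q together with η* = (γ Z^T Z + λ P)^{-1}(γ Z^T S D q) is a global minimizer of f over {(v, η) : v^T v = 1}. -/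
open Matrix

lemma aux_trace_mul_vecMulVec {p : ℕ} (M : Matrix (Fin p) (Fin p) ℝ) (v w : Fin p → ℝ) :
    Matrix.trace (M * vecMulVec v w) = w ⬝ᵥ (M *ᵥ v) := by
  simp only [Matrix.trace, Matrix.diag, mul_apply, vecMulVec_apply, dotProduct, mulVec,
    Finset.mul_sum]
  exact Finset.sum_congr rfl fun i _ => Finset.sum_congr rfl fun j _ => by ring

lemma aux_transpose_vecMulVec {p : ℕ} (v w : Fin p → ℝ) :
    (vecMulVec v w)ᵀ = vecMulVec w v := by
  ext i j; simp [vecMulVec_apply, mul_comm]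

lemma aux_vecMulVec_mul_vecMulVec {p : ℕ} (v w a b : Fin p → ℝ) :
    vecMulVec v w * vecMulVec a b = (w ⬝ᵥ a) • vecMulVec v b := by
  ext i j
  simp only [mul_apply, vecMulVec_apply, Matrix.smul_apply, dotProduct, Finset.sum_mul, smul_eq_mul]
  exact Finset.sum_congr rfl fun k _ => by ring

lemma aux_mulVec_dot {n1 n2 : ℕ} (B : Matrix (Fin n1) (Fin n2) ℝ) (x : Fin n2 → ℝ)
    (y : Fin n1 → ℝ) : x ⬝ᵥ (Bᵀ *ᵥ y) = (B *ᵥ x) ⬝ᵥ y := by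
  rw [dotProduct_mulVec, vecMul_transpose]

lemma aux_dot_self_nonneg {k : ℕ} (x : Fin k → ℝ) : 0 ≤ x ⬝ᵥ x :=
  Finset.sum_nonneg fun _ _ => mul_self_nonneg _

lemma aux_ortho {n1 n2 : ℕ} (B : Matrix (Fin n1) (Fin n2) ℝ) (hB : Bᵀ * B = 1)
    (w : Fin n2 → ℝ) : (B *ᵥ w) ⬝ᵥ (B *ᵥ w) = w ⬝ᵥ w := by
  rw [← aux_mulVec_dot, mulVec_mulVec, hB, one_mulVec]

theorem stmt10 {n p m : ℕ} (Y S : Matrix (Fin n) (Fin p) ℝ) (d : Fin p → ℝ)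
    (T : Matrix (Fin p) (Fin p) ℝ) (Z : Matrix (Fin n) (Fin m) ℝ)
    (P : Matrix (Fin m) (Fin m) ℝ) (γ lam : ℝ)
    (hγ : 0 < γ) (hlam : 0 < lam) (hP : P.PosDef)
    (hS : Sᵀ * S = 1) (hT : Tᵀ * T = 1) (hY : Y = S * diagonal d * Tᵀ)
    (A : Matrix (Fin p) (Fin p) ℝ)
    (hA : A = (-(γ - 1)) • (diagonal d * diagonal d) +
      γ ^ 2 • (diagonal d * Sᵀ * Z * (γ • (Zᵀ * Z) + lam • P)⁻¹ * Zᵀ * S * diagonal d))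
    (q : Fin p → ℝ) (μ : ℝ) (hq : q ⬝ᵥ q = 1) (heig : A *ᵥ q = μ • q)
    (hmax : ∀ x : Fin p → ℝ, x ⬝ᵥ x = 1 → x ⬝ᵥ (A *ᵥ x) ≤ μ)
    (f : (Fin p → ℝ) → (Fin m → ℝ) → ℝ)
    (hf : f = fun v η => frob2 (Y - Y * vecMulVec v v)
      + γ * ((Y *ᵥ v - Z *ᵥ η) ⬝ᵥ (Y *ᵥ v - Z *ᵥ η)) + lam * (η ⬝ᵥ (P *ᵥ η))) :
    ∀ (v : Fin p → ℝ) (η : Fin m → ℝ), v ⬝ᵥ v = 1 →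
      f (T *ᵥ q) ((γ • (Zᵀ * Z) + lam • P)⁻¹ *ᵥ (γ • (Zᵀ *ᵥ (S *ᵥ (diagonal d *ᵥ q)))))
        ≤ f v η := by
  intro v η hv
  set D : Matrix (Fin p) (Fin p) ℝ := diagonal d with hDdef
  set M : Matrix (Fin m) (Fin m) ℝ := γ • (Zᵀ * Z) + lam • P with hMdef
  have hDT : Dᵀ = D := diagonal_transpose d
  have hPt : Pᵀ = P := by
    have h := hP.isHermitian
    rwa [Matrix.IsHermitian, conjTranspose_eq_transpose_of_trivial] at h
  have hMsym : Mᵀ = M := by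
    rw [hMdef]
    simp [transpose_add, transpose_smul, transpose_mul, transpose_transpose, hPt]
  have hstar : ∀ (k : ℕ) (x : Fin k → ℝ), star x = x := fun k x => by
    funext i; exact star_trivial _
  -- M is positive definite
  have hMpd : M.PosDef := by
    refine posDef_iff_dotProduct_mulVec.mpr ⟨?_, ?_⟩
    · show Mᴴ = M
      rw [conjTranspose_eq_transpose_of_trivial, hMsym]
    · intro x hx
      rw [hstar]
      have e1 : M *ᵥ x = γ • ((Zᵀ * Z) *ᵥ x) + lam • (P *ᵥ x) := by
        rw [hMdef, add_mulVec, smul_mulVec, smul_mulVec]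
      rw [e1, dotProduct_add, dotProduct_smul, dotProduct_smul, smul_eq_mul, smul_eq_mul]
      have h1 : 0 ≤ x ⬝ᵥ ((Zᵀ * Z) *ᵥ x) := by
        rw [← mulVec_mulVec, aux_mulVec_dot]
        exact aux_dot_self_nonneg _
      have h2 : 0 < x ⬝ᵥ (P *ᵥ x) := by
        have := hP.dotProduct_mulVec_pos hx
        rwa [hstar] at this
      have := mul_nonneg hγ.le h1
      nlinarith
  have hdet : IsUnit M.det := hMpd.det_pos.ne'.isUnit
  have hMMinv : M * M⁻¹ = 1 := mul_nonsing_inv M hdet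
  have hMb : ∀ b : Fin m → ℝ, M *ᵥ (M⁻¹ *ᵥ b) = b := fun b => by
    rw [mulVec_mulVec, hMMinv, one_mulVec]
  have hsymm : ∀ a c : Fin m → ℝ, a ⬝ᵥ (M *ᵥ c) = c ⬝ᵥ (M *ᵥ a) := by
    intro a c
    conv_lhs => rw [← hMsym]
    rw [aux_mulVec_dot, dotProduct_comm]
  -- completion of the square: lower bound for the η-part
  have quad : ∀ b w : Fin m → ℝ,
      -(b ⬝ᵥ (M⁻¹ *ᵥ b)) ≤ w ⬝ᵥ (M *ᵥ w) - 2 * (b ⬝ᵥ w) := by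
    intro b w
    set w0 : Fin m → ℝ := M⁻¹ *ᵥ b with hw0
    have h0 : M *ᵥ w0 = b := hMb b
    have hnn : 0 ≤ (w - w0) ⬝ᵥ (M *ᵥ (w - w0)) := by
      have := hMpd.posSemidef.dotProduct_mulVec_nonneg (w - w0)
      rwa [hstar] at this
    have expand : (w - w0) ⬝ᵥ (M *ᵥ (w - w0))
        = w ⬝ᵥ (M *ᵥ w) - 2 * (b ⬝ᵥ w) + (b ⬝ᵥ w0) := by
      rw [mulVec_sub, dotProduct_sub, sub_dotProduct, sub_dotProduct, h0,
        hsymm w0 w, h0, dotProduct_comm w b, dotProduct_comm w0 b]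
      ring
    linarith [hnn, expand.symm.le]
  have quadeq : ∀ b : Fin m → ℝ,
      (M⁻¹ *ᵥ b) ⬝ᵥ (M *ᵥ (M⁻¹ *ᵥ b)) - 2 * (b ⬝ᵥ (M⁻¹ *ᵥ b)) = -(b ⬝ᵥ (M⁻¹ *ᵥ b)) := by
    intro b
    rw [hMb, dotProduct_comm]
    ring
  -- expansion of f
  have hfe : ∀ (v' : Fin p → ℝ) (η' : Fin m → ℝ), v' ⬝ᵥ v' = 1 →
      f v' η' = Matrix.trace (Yᵀ * Y) + (γ - 1) * ((Y *ᵥ v') ⬝ᵥ (Y *ᵥ v'))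
        + ((η' ⬝ᵥ (M *ᵥ η')) - 2 * ((γ • (Zᵀ *ᵥ (Y *ᵥ v'))) ⬝ᵥ η')) := by
    intro v' η' hv'
    have hW : (vecMulVec v' v')ᵀ = vecMulVec v' v' := aux_transpose_vecMulVec v' v'
    have hGdot : v' ⬝ᵥ ((Yᵀ * Y) *ᵥ v') = (Y *ᵥ v') ⬝ᵥ (Y *ᵥ v') := by
      rw [← mulVec_mulVec, aux_mulVec_dot]
    have e1 : frob2 (Y - Y * vecMulVec v' v')
        = Matrix.trace (Yᵀ * Y) - (Y *ᵥ v') ⬝ᵥ (Y *ᵥ v') := by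
      have hexp : (Y - Y * vecMulVec v' v')ᵀ * (Y - Y * vecMulVec v' v')
          = Yᵀ * Y - (Yᵀ * Y) * vecMulVec v' v' - vecMulVec v' v' * (Yᵀ * Y)
            + vecMulVec v' v' * (Yᵀ * Y) * vecMulVec v' v' := by
        rw [transpose_sub, transpose_mul, hW]
        simp only [Matrix.mul_sub, Matrix.sub_mul, Matrix.mul_assoc]
        abel
      have hWW : vecMulVec v' v' * vecMulVec v' v' = vecMulVec v' v' := by
        rw [aux_vecMulVec_mul_vecMulVec, hv', one_smul]
      have t3 : Matrix.trace (vecMulVec v' v' * (Yᵀ * Y) * vecMulVec v' v')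
          = Matrix.trace ((Yᵀ * Y) * vecMulVec v' v') := by
        rw [trace_mul_comm, ← Matrix.mul_assoc, hWW, trace_mul_comm]
      have t2 : Matrix.trace (vecMulVec v' v' * (Yᵀ * Y))
          = Matrix.trace ((Yᵀ * Y) * vecMulVec v' v') := trace_mul_comm _ _
      rw [frob2, hexp, trace_add, trace_sub, trace_sub, t3, t2,
        aux_trace_mul_vecMulVec, hGdot]
      ring
    have e2 : (Y *ᵥ v' - Z *ᵥ η') ⬝ᵥ (Y *ᵥ v' - Z *ᵥ η')
        = (Y *ᵥ v') ⬝ᵥ (Y *ᵥ v') - 2 * ((Zᵀ *ᵥ (Y *ᵥ v')) ⬝ᵥ η')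
          + η' ⬝ᵥ ((Zᵀ * Z) *ᵥ η') := by
      have hzy : (Zᵀ *ᵥ (Y *ᵥ v')) ⬝ᵥ η' = (Y *ᵥ v') ⬝ᵥ (Z *ᵥ η') := by
        rw [dotProduct_comm, aux_mulVec_dot, dotProduct_comm]
      have hzz : η' ⬝ᵥ ((Zᵀ * Z) *ᵥ η') = (Z *ᵥ η') ⬝ᵥ (Z *ᵥ η') := by
        rw [← mulVec_mulVec, aux_mulVec_dot]
      rw [dotProduct_sub, sub_dotProduct, sub_dotProduct, hzy, hzz,
        dotProduct_comm (Z *ᵥ η') (Y *ᵥ v')]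
      ring
    have e3 : η' ⬝ᵥ (M *ᵥ η')
        = γ * (η' ⬝ᵥ ((Zᵀ * Z) *ᵥ η')) + lam * (η' ⬝ᵥ (P *ᵥ η')) := by
      rw [hMdef, add_mulVec, smul_mulVec, smul_mulVec, dotProduct_add,
        dotProduct_smul, dotProduct_smul, smul_eq_mul, smul_eq_mul]
    have e4 : (γ • (Zᵀ *ᵥ (Y *ᵥ v'))) ⬝ᵥ η' = γ * ((Zᵀ *ᵥ (Y *ᵥ v')) ⬝ᵥ η') := by
      rw [smul_dotProduct, smul_eq_mul]
    rw [hf]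
    simp only
    rw [e1, e2, e3, e4]
    ring
  -- the value of f with the optimal η, as a function of v, via x = Tᵀ v
  have hTT : T * Tᵀ = 1 := mul_eq_one_comm.mp hT
  have key : ∀ v' : Fin p → ℝ, v' ⬝ᵥ v' = 1 →
      Matrix.trace (Yᵀ * Y) + (γ - 1) * ((Y *ᵥ v') ⬝ᵥ (Y *ᵥ v'))
        - ((γ • (Zᵀ *ᵥ (Y *ᵥ v'))) ⬝ᵥ (M⁻¹ *ᵥ (γ • (Zᵀ *ᵥ (Y *ᵥ v')))))
      = Matrix.trace (Yᵀ * Y) - (Tᵀ *ᵥ v') ⬝ᵥ (A *ᵥ (Tᵀ *ᵥ v')) := by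
    intro v' hv'
    set x : Fin p → ℝ := Tᵀ *ᵥ v' with hx
    have hYv : Y *ᵥ v' = S *ᵥ (D *ᵥ x) := by
      rw [hY, mulVec_mulVec, mulVec_mulVec]
    have hdd : (Y *ᵥ v') ⬝ᵥ (Y *ᵥ v') = x ⬝ᵥ ((D * D) *ᵥ x) := by
      rw [hYv]
      have h1 : (S *ᵥ (D *ᵥ x)) ⬝ᵥ (S *ᵥ (D *ᵥ x)) = (D *ᵥ x) ⬝ᵥ (D *ᵥ x) :=
        aux_ortho S hS (D *ᵥ x)
      have h2 : x ⬝ᵥ ((D * D) *ᵥ x) = (D *ᵥ x) ⬝ᵥ (D *ᵥ x) := by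
        conv_lhs => rw [← hDT]
        rw [← mulVec_mulVec, aux_mulVec_dot, hDT]
      rw [h1, h2]
    have hZY : Zᵀ *ᵥ (Y *ᵥ v') = (Zᵀ * S * D) *ᵥ x := by
      rw [hYv, mulVec_mulVec, mulVec_mulVec]
    set C : Matrix (Fin m) (Fin p) ℝ := Zᵀ * S * D with hC
    have hCt : Cᵀ = D * Sᵀ * Z := by
      rw [hC, transpose_mul, transpose_mul, transpose_transpose, hDT, Matrix.mul_assoc]
    have hb : (γ • (Zᵀ *ᵥ (Y *ᵥ v'))) ⬝ᵥ (M⁻¹ *ᵥ (γ • (Zᵀ *ᵥ (Y *ᵥ v'))))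
        = γ ^ 2 * ((C *ᵥ x) ⬝ᵥ (M⁻¹ *ᵥ (C *ᵥ x))) := by
      rw [hZY, mulVec_smul, smul_dotProduct, dotProduct_smul, smul_eq_mul, smul_eq_mul]
      ring
    have hAmat : D * Sᵀ * Z * M⁻¹ * Zᵀ * S * D = Cᵀ * M⁻¹ * C := by
      rw [hCt, hC]
      simp only [Matrix.mul_assoc]
    have hAx : x ⬝ᵥ (A *ᵥ x)
        = -(γ - 1) * (x ⬝ᵥ ((D * D) *ᵥ x))
          + γ ^ 2 * ((C *ᵥ x) ⬝ᵥ (M⁻¹ *ᵥ (C *ᵥ x))) := by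
      rw [hA, add_mulVec, dotProduct_add, smul_mulVec, smul_mulVec,
        dotProduct_smul, dotProduct_smul, smul_eq_mul, smul_eq_mul, hAmat]
      have : x ⬝ᵥ ((Cᵀ * M⁻¹ * C) *ᵥ x) = (C *ᵥ x) ⬝ᵥ (M⁻¹ *ᵥ (C *ᵥ x)) := by
        rw [← mulVec_mulVec, ← mulVec_mulVec, aux_mulVec_dot]
      rw [this]
    rw [hb, hdd, hAx]
    ring
  have hTt : Tᵀᵀ * Tᵀ = 1 := by rw [transpose_transpose]; exact hTT
  have hxx : (Tᵀ *ᵥ v) ⬝ᵥ (Tᵀ *ᵥ v) = 1 := by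
    rw [aux_ortho Tᵀ hTt v, hv]
  -- value at the candidate minimizer
  have hxq : Tᵀ *ᵥ (T *ᵥ q) = q := by
    rw [mulVec_mulVec, hT, one_mulVec]
  have hTq : (T *ᵥ q) ⬝ᵥ (T *ᵥ q) = 1 := by
    rw [aux_ortho T hT q, hq]
  have hYTq : Y *ᵥ (T *ᵥ q) = S *ᵥ (D *ᵥ q) := by
    rw [hY, mulVec_mulVec, mulVec_mulVec, Matrix.mul_assoc, hT, Matrix.mul_one]
  have hval : f (T *ᵥ q) (M⁻¹ *ᵥ (γ • (Zᵀ *ᵥ (S *ᵥ (D *ᵥ q)))))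
      = Matrix.trace (Yᵀ * Y) - μ := by
    have hb' : γ • (Zᵀ *ᵥ (S *ᵥ (D *ᵥ q))) = γ • (Zᵀ *ᵥ (Y *ᵥ (T *ᵥ q))) := by
      rw [hYTq]
    rw [hb', hfe (T *ᵥ q) _ hTq, quadeq]
    have := key (T *ᵥ q) hTq
    rw [hxq] at this
    rw [show Matrix.trace (Yᵀ * Y) + (γ - 1) * ((Y *ᵥ (T *ᵥ q)) ⬝ᵥ (Y *ᵥ (T *ᵥ q)))
        + -((γ • (Zᵀ *ᵥ (Y *ᵥ (T *ᵥ q)))) ⬝ᵥ (M⁻¹ *ᵥ (γ • (Zᵀ *ᵥ (Y *ᵥ (T *ᵥ q))))))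
        = Matrix.trace (Yᵀ * Y) + (γ - 1) * ((Y *ᵥ (T *ᵥ q)) ⬝ᵥ (Y *ᵥ (T *ᵥ q)))
        - ((γ • (Zᵀ *ᵥ (Y *ᵥ (T *ᵥ q)))) ⬝ᵥ (M⁻¹ *ᵥ (γ • (Zᵀ *ᵥ (Y *ᵥ (T *ᵥ q)))))) from by ring,
      this, heig, dotProduct_smul, smul_eq_mul, hq, mul_one]
  -- conclude
  rw [hval, hfe v η hv]
  have h1 : -((γ • (Zᵀ *ᵥ (Y *ᵥ v))) ⬝ᵥ (M⁻¹ *ᵥ (γ • (Zᵀ *ᵥ (Y *ᵥ v)))))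
      ≤ η ⬝ᵥ (M *ᵥ η) - 2 * ((γ • (Zᵀ *ᵥ (Y *ᵥ v))) ⬝ᵥ η) := quad _ η
  have h2 := key v hv
  have h3 := hmax (Tᵀ *ᵥ v) hxx
  linarith
end

section
/- Let M ∈ ℝ^{n×m}, P ∈ ℝ^{m×m} symmetric positive definite, and γ, λ > 0. Then γ² M (γ M^T M + λ P)^{-1} M^T is symmetric positive semidefinite, and all its eigenvalues are at most γ. -/
open Matrix

private lemma smul_posSemidef_aux {k : ℕ} {c : ℝ} (hc : 0 ≤ c)
    {A : Matrix (Fin k) (Fin k) ℝ} (hA : A.PosSemidef) : (c • A).PosSemidef := by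
  refine PosSemidef.of_dotProduct_mulVec_nonneg ?_ fun x => ?_
  · unfold Matrix.IsHermitian
    rw [conjTranspose_smul, hA.1.eq]
    simp
  · rw [smul_mulVec, dotProduct_smul, smul_eq_mul]
    exact mul_nonneg hc (hA.dotProduct_mulVec_nonneg x)

private lemma smul_posDef_aux {k : ℕ} {c : ℝ} (hc : 0 < c)
    {A : Matrix (Fin k) (Fin k) ℝ} (hA : A.PosDef) : (c • A).PosDef := by
  refine PosDef.of_dotProduct_mulVec_pos ?_ fun x hx => ?_
  · unfold Matrix.IsHermitian
    rw [conjTranspose_smul, hA.1.eq]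
    simp
  · rw [smul_mulVec, dotProduct_smul, smul_eq_mul]
    exact mul_pos hc (hA.dotProduct_mulVec_pos hx)

theorem stmt12 {n m : ℕ} (M : Matrix (Fin n) (Fin m) ℝ) (P : Matrix (Fin m) (Fin m) ℝ)
    (hP : P.PosDef) (γ lam : ℝ) (hγ : 0 < γ) (hlam : 0 < lam)
    (B : Matrix (Fin n) (Fin n) ℝ)
    (hB : B = γ ^ 2 • (M * (γ • (Mᵀ * M) + lam • P)⁻¹ * Mᵀ)) :
    ∃ h : B.PosSemidef, ∀ i, h.isHermitian.eigenvalues i ≤ γ := by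
  set Q : Matrix (Fin m) (Fin m) ℝ := γ • (Mᵀ * M) + lam • P with hQdef
  have hMM : (Mᵀ * M).PosSemidef := by
    simpa [conjTranspose_eq_transpose_of_trivial] using posSemidef_conjTranspose_mul_self M
  have hQ : Q.PosDef := by
    have h1 : (lam • P).PosDef := smul_posDef_aux hlam hP
    have h2 : (γ • (Mᵀ * M)).PosSemidef := smul_posSemidef_aux hγ.le hMM
    have h3 := h1.add_posSemidef h2
    rw [hQdef, add_comm]
    exact h3
  have hQi : Q⁻¹.PosDef := hQ.inv
  have hBpsd : B.PosSemidef := by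
    rw [hB]
    refine smul_posSemidef_aux (sq_nonneg γ) ?_
    have := hQi.posSemidef.mul_mul_conjTranspose_same M
    simpa [conjTranspose_eq_transpose_of_trivial] using this
  have hdot : ∀ (w : Fin m → ℝ) (u : Fin n → ℝ), w ⬝ᵥ (Mᵀ *ᵥ u) = (M *ᵥ w) ⬝ᵥ u := by
    intro w u
    rw [dotProduct_mulVec, ← mulVec_transpose Mᵀ w, transpose_transpose]
  have hquad : ∀ x : Fin n → ℝ, x ⬝ᵥ (B *ᵥ x) ≤ γ * (x ⬝ᵥ x) := by
    intro x
    set y : Fin m → ℝ := Mᵀ *ᵥ x with hy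
    set z : Fin m → ℝ := Q⁻¹ *ᵥ y with hz
    have hQz : Q *ᵥ z = y := by
      rw [hz, mulVec_mulVec, mul_nonsing_inv Q hQ.det_pos.ne'.isUnit, one_mulVec]
    have hBx : x ⬝ᵥ (B *ᵥ x) = γ ^ 2 * ((M *ᵥ z) ⬝ᵥ x) := by
      rw [hB, smul_mulVec, dotProduct_smul, smul_eq_mul]
      congr 1
      rw [← mulVec_mulVec, ← mulVec_mulVec, ← hy, ← hz, dotProduct_comm]
    set s : ℝ := z ⬝ᵥ (Q *ᵥ z) with hsdef
    have hs0 : 0 ≤ s := by simpa using hQ.posSemidef.dotProduct_mulVec_nonneg z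
    have hsx : s = (M *ᵥ z) ⬝ᵥ x := by rw [hsdef, hQz, hy, hdot]
    have hxx : 0 ≤ x ⬝ᵥ x := Finset.sum_nonneg fun i _ => mul_self_nonneg _
    have hMzz : 0 ≤ (M *ᵥ z) ⬝ᵥ (M *ᵥ z) := Finset.sum_nonneg fun i _ => mul_self_nonneg _
    have hMz : γ * ((M *ᵥ z) ⬝ᵥ (M *ᵥ z)) ≤ s := by
      have hPz : 0 ≤ lam * (z ⬝ᵥ (P *ᵥ z)) :=
        mul_nonneg hlam.le (by simpa using hP.posSemidef.dotProduct_mulVec_nonneg z)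
      have hseq : s = γ * ((M *ᵥ z) ⬝ᵥ (M *ᵥ z)) + lam * (z ⬝ᵥ (P *ᵥ z)) := by
        rw [hsdef, hQdef, add_mulVec, dotProduct_add, smul_mulVec, smul_mulVec,
          dotProduct_smul, dotProduct_smul, smul_eq_mul, smul_eq_mul]
        congr 2
        rw [← mulVec_mulVec, hdot]
      linarith
    have hCS : ((M *ᵥ z) ⬝ᵥ x) ^ 2 ≤ ((M *ᵥ z) ⬝ᵥ (M *ᵥ z)) * (x ⬝ᵥ x) := by
      have := Finset.sum_mul_sq_le_sq_mul_sq Finset.univ (M *ᵥ z) x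
      simpa [dotProduct, pow_two] using this
    have key : γ * s ≤ x ⬝ᵥ x := by
      rcases eq_or_lt_of_le hs0 with h | h
      · rw [← h, mul_zero]; exact hxx
      · have h1 : γ * s * s ≤ (x ⬝ᵥ x) * s := by
          calc γ * s * s = γ * s ^ 2 := by ring
            _ = γ * ((M *ᵥ z) ⬝ᵥ x) ^ 2 := by rw [hsx]
            _ ≤ γ * (((M *ᵥ z) ⬝ᵥ (M *ᵥ z)) * (x ⬝ᵥ x)) :=
                mul_le_mul_of_nonneg_left hCS hγ.le
            _ = (γ * ((M *ᵥ z) ⬝ᵥ (M *ᵥ z))) * (x ⬝ᵥ x) := by ring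
            _ ≤ s * (x ⬝ᵥ x) := mul_le_mul_of_nonneg_right hMz hxx
            _ = (x ⬝ᵥ x) * s := mul_comm _ _
        exact le_of_mul_le_mul_right h1 h
    rw [hBx, ← hsx]
    calc γ ^ 2 * s = γ * (γ * s) := by ring
      _ ≤ γ * (x ⬝ᵥ x) := mul_le_mul_of_nonneg_left key hγ.le
  refine ⟨hBpsd, fun i => ?_⟩
  have hH := hBpsd.isHermitian
  set v : Fin n → ℝ := ⇑(hH.eigenvectorBasis i) with hv
  have hnorm : v ⬝ᵥ v = 1 := by
    have h1 : ‖hH.eigenvectorBasis i‖ = 1 := hH.eigenvectorBasis.orthonormal.1 i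
    have h2 : v ⬝ᵥ v = ‖hH.eigenvectorBasis i‖ ^ 2 := by
      rw [EuclideanSpace.norm_eq, Real.sq_sqrt (by positivity)]
      simp [dotProduct, Real.norm_eq_abs, sq_abs, pow_two, hv]
    rw [h2, h1, one_pow]
  have heig := hH.eigenvalues_eq i
  have hq := hquad v
  rw [hnorm, mul_one] at hq
  calc hH.eigenvalues i = v ⬝ᵥ (B *ᵥ v) := by simpa using heig
    _ ≤ γ := hq
end
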